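/- arXiv:1808.00056 — 2 statements merged into one kernel-verified Lean document; each statement's English description precedes it below -/
import Mathlib

section
/- Let F be a field that is finitely generated as a field extension of ℚ, and let L := {x ∈ F : x is algebraic over ℚ} be the relative algebraic closure of ℚ in F. Then L is a number field, i.e., L is finite-dimensional as a ℚ-vector space. -/
set_option synthInstance.maxHeartbeats 1000000
set_option maxHeartbeats 1000000

open Polynomial IntermediateField

/-- Any element of the fraction field of a multivariate polynomial ring over a field `k` that is
integral over `k` is a constant. -/
theorem aux_mvRatFunc_integral_mem_range {k σ : Type*} [Field k]
    (y : FractionRing (MvPolynomial σ k)) (h : IsIntegral k y) :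
    ∃ r : k, algebraMap k _ r = y := by
  have h2 : IsIntegral (MvPolynomial σ k) y := h.tower_top
  obtain ⟨p, hp⟩ := IsIntegrallyClosed.isIntegral_iff.mp h2
  have hinj : Function.Injective
      (algebraMap (MvPolynomial σ k) (FractionRing (MvPolynomial σ k))) :=
    IsFractionRing.injective _ _
  have hpi : IsIntegral k p := by
    rw [← hp] at h
    exact (isIntegral_algHom_iff (IsScalarTower.toAlgHom k (MvPolynomial σ k) _) hinj).mp h
  set φ : MvPolynomial σ k →ₐ[k] k := MvPolynomial.aeval (fun _ => 0) with hφ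
  set r : k := φ p with hr
  have hpr : p = MvPolynomial.C r := by
    by_contra hne
    set p' : MvPolynomial σ k := p - MvPolynomial.C r with hp'
    have hne' : p' ≠ 0 := sub_ne_zero.mpr hne
    have hint : IsIntegral k p' := by
      have : IsIntegral k (MvPolynomial.C (σ := σ) r) := by
        rw [← MvPolynomial.algebraMap_eq]
        exact isIntegral_algebraMap
      exact hpi.sub this
    have h0 : φ p' = 0 := by simp [hp', hr]
    have haev := minpoly.aeval k p'
    have h1 : (Polynomial.aeval (φ p')) (minpoly k p') = 0 := by
      rw [Polynomial.aeval_algHom_apply, haev, map_zero]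
    rw [h0] at h1
    have h2' : (minpoly k p').coeff 0 = 0 := by
      simpa [Polynomial.coeff_zero_eq_eval_zero] using h1
    exact minpoly.coeff_zero_ne_zero hint hne' h2'
  refine ⟨r, ?_⟩
  rw [← hp, hpr, ← MvPolynomial.algebraMap_eq, ← IsScalarTower.algebraMap_apply]

/-- The integral closure of `k` in a purely transcendental intermediate field is trivial. -/
theorem aux_integralClosure_adjoin_range_eq_bot {k F : Type*} [Field k] [Field F] [Algebra k F]
    {ι : Type*} {s : ι → F} (hs : AlgebraicIndependent k s) :
    integralClosure k (IntermediateField.adjoin k (Set.range s)) = ⊥ := by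
  refine le_antisymm ?_ bot_le
  intro c hc
  have hc' : IsIntegral k c := hc
  let e := hs.aevalEquivField
  have hy : IsIntegral k (e.symm c) := hc'.map e.symm
  obtain ⟨r, hr⟩ := aux_mvRatFunc_integral_mem_range _ hy
  refine Algebra.mem_bot.mpr ⟨r, ?_⟩
  have := congrArg e hr
  rwa [AlgEquiv.commutes, AlgEquiv.apply_symm_apply] at this

/-- If `K` is an intermediate field of `F/k` containing no algebraic elements beyond `k`,
with `F/K` finite, then the degree of any element of `F` algebraic over `k` is at most
`[F:K]`. -/
theorem aux_minpoly_natDegree_le {k F : Type*} [Field k] [Field F] [Algebra k F]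
    (K : IntermediateField k F) (hK : integralClosure k K = ⊥) [FiniteDimensional K F]
    {x : F} (hx : IsAlgebraic k x) :
    (minpoly k x).natDegree ≤ Module.finrank K F := by
  have hxK : IsIntegral K x := hx.isIntegral.tower_top
  have hgmonic : (minpoly K x).Monic := minpoly.monic hxK
  have hdvd : minpoly K x ∣ (minpoly k x).map (algebraMap k K) :=
    minpoly.dvd_map_of_isScalarTower k K x
  have hlift : minpoly K x ∈ Polynomial.lifts (algebraMap (integralClosure k K) K) :=
    integralClosure.mem_lifts_of_monic_of_dvd_map K (minpoly.monic hx.isIntegral)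
      hgmonic hdvd
  have hlift' : minpoly K x ∈ Polynomial.lifts (algebraMap k K) := by
    rw [Polynomial.lifts_iff_coeff_lifts] at hlift ⊢
    intro n
    obtain ⟨c, hc⟩ := hlift n
    have hcmem : (c : K) ∈ (⊥ : Subalgebra k K) := hK ▸ c.2
    obtain ⟨r, hr⟩ := Algebra.mem_bot.mp hcmem
    exact ⟨r, by rw [hr]; exact hc⟩
  obtain ⟨m, hmap, hdeg, hmonic⟩ := Polynomial.lifts_and_degree_eq_and_monic hlift' hgmonic
  have haev : Polynomial.aeval x m = 0 := by
    have h := minpoly.aeval K x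
    rw [← hmap, Polynomial.aeval_map_algebraMap] at h
    exact h
  have hdv2 : minpoly k x ∣ m := minpoly.dvd k x haev
  calc (minpoly k x).natDegree ≤ m.natDegree :=
        Polynomial.natDegree_le_of_dvd hdv2 hmonic.ne_zero
    _ = (minpoly K x).natDegree := Polynomial.natDegree_eq_of_degree_eq hdeg
    _ ≤ Module.finrank K F := minpoly.natDegree_le x

/-- An algebraic extension of a characteristic-zero field with uniformly bounded degrees is
finite-dimensional. -/
theorem aux_finiteDimensional_of_bounded {k L : Type*} [Field k] [CharZero k] [Field L]
    [Algebra k L] [Algebra.IsAlgebraic k L] {n : ℕ}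
    (hb : ∀ y : L, (minpoly k y).natDegree ≤ n) : FiniteDimensional k L := by
  set D : Set ℕ := Set.range fun y : L => (minpoly k y).natDegree with hD
  have hbdd : BddAbove D := ⟨n, by rintro _ ⟨y, rfl⟩; exact hb y⟩
  have hne : D.Nonempty := ⟨_, ⟨0, rfl⟩⟩
  obtain ⟨y₀, hy₀⟩ := Nat.sSup_mem hne hbdd
  have hy₀' : (minpoly k y₀).natDegree = sSup D := hy₀
  have hy₀int : IsIntegral k y₀ := (Algebra.IsAlgebraic.isAlgebraic y₀).isIntegral
  refine Field.FiniteDimensional.of_exists_primitive_element k L ⟨y₀, ?_⟩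
  rw [eq_top_iff]
  intro y _
  set A : IntermediateField k L := k⟮y₀⟯ with hA
  set B : IntermediateField k L := IntermediateField.adjoin k {y₀, y} with hB
  haveI : Finite ({y₀, y} : Set L) :=
    (Set.Finite.insert y₀ (Set.finite_singleton y)).to_subtype
  haveI hBfd : FiniteDimensional k B :=
    IntermediateField.finiteDimensional_adjoin
      (fun z _ => (Algebra.IsAlgebraic.isAlgebraic z).isIntegral)
  have hAB : A ≤ B := by
    rw [hA, hB]
    apply IntermediateField.adjoin_simple_le_iff.mpr
    exact IntermediateField.subset_adjoin k _ (Set.mem_insert y₀ {y})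
  have hfinA : Module.finrank k A = (minpoly k y₀).natDegree :=
    IntermediateField.adjoin.finrank hy₀int
  have hfinB : Module.finrank k B ≤ sSup D := by
    obtain ⟨α, hα⟩ := Field.exists_primitive_element k ↥B
    have hαint : IsIntegral k α := (Algebra.IsAlgebraic.isAlgebraic α).isIntegral
    have h1 : Module.finrank k ↥(k⟮α⟯ : IntermediateField k B) = (minpoly k α).natDegree :=
      IntermediateField.adjoin.finrank hαint
    rw [hα] at h1
    have h2 : Module.finrank k B = (minpoly k α).natDegree := by
      rw [← h1]
      exact (IntermediateField.topEquiv (F := k) (E := B)).toLinearEquiv.finrank_eq.symm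
    rw [h2]
    have h3 : minpoly k (B.val α) = minpoly k α :=
      minpoly.algHom_eq B.val (fun _ _ h => Subtype.ext_iff.mpr h) α
    rw [← h3]
    exact le_csSup hbdd ⟨B.val α, rfl⟩
  have hABeq : A = B := by
    refine IntermediateField.eq_of_le_of_finrank_le hAB ?_
    rw [hfinA, hy₀']
    exact hfinB
  have hyB : y ∈ B := IntermediateField.subset_adjoin k _ (Set.mem_insert_of_mem y₀ rfl)
  rw [← hABeq] at hyB
  exact hyB

/-- If `F` is a field that is finitely generated as a field extension of `ℚ`,
then the relative algebraic closure of `ℚ` in `F` (the intermediate field of all elements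
of `F` algebraic over `ℚ`) is a number field, i.e. finite-dimensional over `ℚ`. -/
theorem relativeAlgebraicClosure_finiteDimensional (F : Type*) [Field F] [Algebra ℚ F]
    (hFG : ∃ S : Finset F, IntermediateField.adjoin ℚ (S : Set F) = ⊤) :
    FiniteDimensional ℚ (algebraicClosure ℚ F) := by
  obtain ⟨S, hS⟩ := hFG
  obtain ⟨ι, s, hs⟩ := exists_isTranscendenceBasis' ℚ F
  set K : IntermediateField ℚ F := IntermediateField.adjoin ℚ (Set.range s) with hKdef
  haveI : Algebra.IsAlgebraic K F := hs.isAlgebraic_field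
  have htop : IntermediateField.adjoin K (S : Set F) = ⊤ := by
    have h1 : IntermediateField.adjoin ℚ (S : Set F) ≤
        (IntermediateField.adjoin K (S : Set F)).restrictScalars ℚ :=
      IntermediateField.adjoin_le_iff.mpr (IntermediateField.subset_adjoin K _)
    rw [hS] at h1
    rw [eq_top_iff]
    intro x _
    exact h1 (IntermediateField.mem_top (x := x))
  haveI : FiniteDimensional K F := by
    haveI hfd : FiniteDimensional K (IntermediateField.adjoin K (S : Set F)) :=
      IntermediateField.finiteDimensional_adjoin
        (fun z _ => (Algebra.IsAlgebraic.isAlgebraic z).isIntegral)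
    rw [htop] at hfd
    exact (IntermediateField.topEquiv (F := K) (E := F)).toLinearEquiv.finiteDimensional
  have hK := aux_integralClosure_adjoin_range_eq_bot hs.1
  letI : Algebra ℚ ↥(algebraicClosure ℚ F) := (algebraicClosure ℚ F).algebra'
  haveI : Algebra.IsAlgebraic ℚ ↥(algebraicClosure ℚ F) := algebraicClosure.isAlgebraic ℚ F
  refine aux_finiteDimensional_of_bounded (k := ℚ) (L := ↥(algebraicClosure ℚ F))
    (n := Module.finrank K F) ?_
  intro y
  have hyalg : IsAlgebraic ℚ ((y : F)) := mem_algebraicClosure_iff.mp y.2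
  have h3 : minpoly ℚ ((algebraicClosure ℚ F).val y) = minpoly ℚ y :=
    minpoly.algHom_eq (algebraicClosure ℚ F).val (fun _ _ h => Subtype.ext_iff.mpr h) y
  rw [← h3]
  exact aux_minpoly_natDegree_le K hK hyalg
end

section
/- Let F be a field that is finitely generated as a field extension of ℚ, and fix an algebraic closure F̄ of F. Then there exist elements m₁, m₂ ∈ F such that the intermediate field K := F(√m₁, √m₂) of F̄/F, generated over F by square roots of m₁ and m₂, satisfies [K : F] = 4; that is, F admits a separable biquadratic extension. -/
open IntermediateField Polynomial



section Quad
variable {K E : Type*} [Field K] [Field E] [Algebra K E]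

lemma isIntegral_of_sq {a : K} {y : E} (hy : y ^ 2 = algebraMap K E a) : IsIntegral K y :=
  ⟨X ^ 2 - C a, monic_X_pow_sub_C a two_ne_zero, by simp [hy]⟩

lemma exists_repr_of_mem_adjoin_sq {a : K} {y : E} (hy : y ^ 2 = algebraMap K E a) {z : E}
    (hz : z ∈ K⟮y⟯) : ∃ c d : K, z = algebraMap K E c + algebraMap K E d * y := by
  have hyI : IsIntegral K y := isIntegral_of_sq hy
  have hz' : z ∈ Algebra.adjoin K ({y} : Set E) := by
    rw [← adjoin_simple_toSubalgebra_of_isAlgebraic hyI.isAlgebraic]; exact hz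
  rw [Algebra.adjoin_singleton_eq_range_aeval] at hz'
  obtain ⟨f, rfl⟩ := hz'
  have hm : (X ^ 2 - C a).Monic := monic_X_pow_sub_C a two_ne_zero
  have hroot : aeval y (X ^ 2 - C a) = 0 := by simp [hy]
  have hzr : aeval y f = aeval y (f %ₘ (X ^ 2 - C a)) := by
    conv_lhs => rw [← modByMonic_add_div f (X ^ 2 - C a)]
    simp [hroot]
  have hdeg : (f %ₘ (X ^ 2 - C a)).degree ≤ 1 := by
    have h2 := degree_modByMonic_lt f hm
    rw [degree_X_pow_sub_C (by norm_num : 0 < 2)] at h2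
    exact Order.le_of_lt_succ (by exact_mod_cast h2)
  refine ⟨(f %ₘ (X ^ 2 - C a)).coeff 0, (f %ₘ (X ^ 2 - C a)).coeff 1, ?_⟩
  show aeval y f = _
  rw [hzr]
  conv_lhs => rw [eq_X_add_C_of_degree_le_one hdeg]
  rw [map_add, map_mul, aeval_C, aeval_X, aeval_C]; ring

lemma sq_not_mem_adjoin (h2 : (2 : K) ≠ 0) {a b : K}
    (ha : ∀ c : K, c ^ 2 ≠ a) (hb : ∀ c : K, c ^ 2 ≠ b) (hab : ∀ c : K, c ^ 2 ≠ a * b)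
    {y z : E} (hy : y ^ 2 = algebraMap K E a) (hz : z ^ 2 = algebraMap K E b) :
    z ∉ K⟮y⟯ := by
  intro hmem
  obtain ⟨c, d, hrep⟩ := exists_repr_of_mem_adjoin_sq hy hmem
  have hinj : Function.Injective (algebraMap K E) := (algebraMap K E).injective
  have key : algebraMap K E (c ^ 2 + d ^ 2 * a) + algebraMap K E (2 * c * d) * y
      = algebraMap K E b := by
    rw [← hz, hrep]
    push_cast [map_add, map_mul, map_pow, map_ofNat]
    rw [← hy]; ring
  by_cases hd : d = 0
  · subst hd
    apply hb c
    apply hinj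
    simpa using key
  by_cases hc : c = 0
  · subst hc
    apply hab (d * a)
    apply hinj
    have : algebraMap K E (d ^ 2 * a) = algebraMap K E b := by simpa using key
    rw [map_pow, map_mul]
    calc (algebraMap K E d * algebraMap K E a) ^ 2
        = algebraMap K E (d ^ 2 * a) * algebraMap K E a := by push_cast [map_mul, map_pow]; ring
      _ = algebraMap K E a * algebraMap K E b := by rw [this]; ring
      _ = algebraMap K E (a * b) := by rw [map_mul]
  · -- y is in the image of K
    have h2cd : (2 * c * d : K) ≠ 0 := by
      simp only [mul_ne_zero_iff]; exact ⟨⟨h2, hc⟩, hd⟩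
    have hkey2 : algebraMap K E (2 * c * d) * y = algebraMap K E (b - (c ^ 2 + d ^ 2 * a)) := by
      rw [map_sub]; linear_combination key
    have hne : algebraMap K E (2 * c * d) ≠ 0 := by
      simpa using h2cd
    have hy' : y = algebraMap K E ((b - (c ^ 2 + d ^ 2 * a)) / (2 * c * d)) := by
      rw [map_div₀, eq_div_iff hne]
      linear_combination hkey2
    apply ha ((b - (c ^ 2 + d ^ 2 * a)) / (2 * c * d))
    apply hinj
    rw [map_pow, ← hy', hy]

lemma finrank_adjoin_sq (ha : ∀ c : K, c ^ 2 ≠ a) {y : E} (hy : y ^ 2 = algebraMap K E a) :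
    Module.finrank K K⟮y⟯ = 2 := by
  have hirr : Irreducible (X ^ 2 - C a) :=
    X_pow_sub_C_irreducible_of_prime Nat.prime_two ha
  have hmin : minpoly K y = X ^ 2 - C a :=
    (minpoly.eq_of_irreducible_of_monic hirr (by simp [hy]) (monic_X_pow_sub_C a two_ne_zero)).symm
  rw [adjoin.finrank (isIntegral_of_sq hy), hmin, natDegree_X_pow_sub_C]

end Quad


lemma nonsquare_adjoin_transcendental {F : Type*} [Field F] [Algebra ℚ F] {T : Set F}
    (hT : AlgebraicIndependent ℚ (Subtype.val : T → F)) {r : ℚ} (hr : ∀ c : ℚ, c ^ 2 ≠ r) :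
    ∀ z ∈ IntermediateField.adjoin ℚ T, z ^ 2 ≠ algebraMap ℚ F r := by
  intro z hz hz2
  rw [IntermediateField.mem_adjoin_iff] at hz
  obtain ⟨f, g, hfg⟩ := hz
  by_cases hg : (MvPolynomial.aeval (Subtype.val : T → F)) g = 0
  · rw [hfg, hg, div_zero] at hz2
    refine hr 0 ?_
    have : (algebraMap ℚ F) ((0:ℚ)^2) = algebraMap ℚ F r := by simpa using hz2
    simpa using (algebraMap ℚ F).injective this
  · have hpoly : (MvPolynomial.aeval (Subtype.val : T → F)) (f ^ 2 - MvPolynomial.C r * g ^ 2)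
        = 0 := by
      have : z * (MvPolynomial.aeval (Subtype.val : T → F)) g
          = (MvPolynomial.aeval (Subtype.val : T → F)) f := by
        rw [hfg]; field_simp
      have hsq : ((MvPolynomial.aeval (Subtype.val : T → F)) f) ^ 2
          = algebraMap ℚ F r * ((MvPolynomial.aeval (Subtype.val : T → F)) g) ^ 2 := by
        rw [← this, mul_pow, hz2]
      simp only [map_sub, map_mul, map_pow, MvPolynomial.algHom_C]
      rw [hsq]
      ring
    have hzero : f ^ 2 - MvPolynomial.C r * g ^ 2 = 0 := by
      apply hT
      simpa using hpoly
    have hfg2 : f ^ 2 = MvPolynomial.C r * g ^ 2 := by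
      rw [sub_eq_zero] at hzero; exact hzero
    have hgne : g ≠ 0 := by
      intro h; apply hg; rw [h]; simp
    obtain ⟨v, hv⟩ : ∃ v : T → ℚ, MvPolynomial.eval v g ≠ 0 := by
      by_contra h
      push_neg at h
      exact hgne (MvPolynomial.funext (fun x => by rw [h x]; simp))
    have := congrArg (MvPolynomial.eval v) hfg2
    simp only [map_mul, map_pow, MvPolynomial.eval_C] at this
    exact hr (MvPolynomial.eval v f / MvPolynomial.eval v g)
      (by field_simp; linear_combination this)


lemma not_isSquare_of_squarefree {n : ℕ} (h2 : 2 ≤ n) (hsf : Squarefree n) : ¬IsSquare n := by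
  rintro ⟨k, hk⟩
  have hu : IsUnit k := hsf k (hk ▸ dvd_refl _)
  rw [Nat.isUnit_iff] at hu
  rw [hu] at hk
  omega

lemma not_isSquare_mul_of_squarefree {n m : ℕ} (hn : Squarefree n) (hm : Squarefree m)
    (hne : n ≠ m) : ¬IsSquare (n * m) := by
  rintro ⟨k, hk⟩
  have hnz : n ≠ 0 := by rintro rfl; exact not_squarefree_zero hn
  have h1 : n ∣ k ^ 2 := by rw [pow_two, ← hk]; exact Dvd.intro m rfl
  have h2 : n ∣ k := (hn.dvd_pow_iff_dvd two_ne_zero).mp h1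
  obtain ⟨a, rfl⟩ := h2
  have hm' : m = n * (a * a) := by
    apply mul_left_cancel₀ hnz
    rw [hk]; ring
  have hu : IsUnit a := hm a ⟨n, by rw [hm']; ring⟩
  rw [Nat.isUnit_iff] at hu
  subst hu
  simp at hm'
  exact hne hm'.symm

lemma algIndep_insert {F : Type*} [Field F] [Algebra ℚ F] {T : Set F} {x : F}
    (hT : AlgebraicIndependent ℚ (Subtype.val : T → F))
    (hx : Transcendental (IntermediateField.adjoin ℚ T) x) :
    AlgebraicIndependent ℚ (Subtype.val : ↑(insert x T) → F) := by
  classical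
  have h2 : Transcendental (Algebra.adjoin ℚ (Set.range (Subtype.val : T → F))) x := by
    rw [Subtype.range_coe]
    intro halg
    apply hx
    letI : Algebra (Algebra.adjoin ℚ T) (IntermediateField.adjoin ℚ T) :=
      (Subalgebra.inclusion (IntermediateField.algebra_adjoin_le_adjoin ℚ T)).toRingHom.toAlgebra
    haveI : IsScalarTower (Algebra.adjoin ℚ T) (IntermediateField.adjoin ℚ T) F :=
      IsScalarTower.of_algebraMap_eq (congrFun rfl)
    exact halg.extendScalars (fun a b h =>
      Subtype.ext (show (a : F) = (b : F) from congrArg Subtype.val h))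
  have h3 := (hT.option_iff_transcendental x).mpr h2
  let f : ↑(insert x T) → Option ↑T := fun a => if h : (a : F) ∈ T then some ⟨a, h⟩ else none
  have hxT : x ∉ T := by
    intro h
    exact hx (isAlgebraic_algebraMap (⟨x, subset_adjoin ℚ T h⟩ : IntermediateField.adjoin ℚ T))
  have hval : ∀ a : ↑(insert x T), (a : F) ∉ T → (a : F) = x := by
    intro a ha
    rcases a.2 with h' | h'
    · exact h'
    · exact absurd h' ha
  have hinj : Function.Injective f := by
    intro a b hab
    simp only [f] at hab
    by_cases ha : (a : F) ∈ T <;> by_cases hb : (b : F) ∈ T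
    · rw [dif_pos ha, dif_pos hb] at hab
      injection hab with h
      have h2 : ((⟨(a : F), ha⟩ : ↑T) : F) = ((⟨(b : F), hb⟩ : ↑T) : F) := congrArg Subtype.val h
      exact Subtype.ext h2
    · rw [dif_pos ha, dif_neg hb] at hab
      exact (Option.some_ne_none _ hab).elim
    · rw [dif_neg ha, dif_pos hb] at hab
      exact (Option.some_ne_none _ hab.symm).elim
    · exact Subtype.ext ((hval a ha).trans (hval b hb).symm)
  have hcomp : (fun o : Option ↑T => o.elim x Subtype.val) ∘ f
      = (Subtype.val : ↑(insert x T) → F) := by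
    funext a
    by_cases h : (a : F) ∈ T
    · simp [f, h]
    · simp [f, h, hval a h, hxT]
  have h4 := h3.comp f hinj
  rwa [hcomp] at h4

lemma exists_good_primes (F : Type*) [Field F] [Algebra ℚ F]
    (hFG : ∃ S : Finset F, IntermediateField.adjoin ℚ (S : Set F) = ⊤) :
    ∃ p q : ℕ, (∀ y : F, y ^ 2 ≠ (p : F)) ∧ (∀ y : F, y ^ 2 ≠ (q : F)) ∧
      (∀ y : F, y ^ 2 ≠ ((p * q : ℕ) : F)) := by
  haveI : CharZero F := charZero_of_injective_algebraMap (algebraMap ℚ F).injective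
  obtain ⟨S, hS⟩ := hFG
  obtain ⟨T, -, hmax⟩ := exists_maximal_algebraicIndependent (∅ : Set F) (S : Set F)
    (Set.empty_subset _) (algebraicIndependent_empty (K := ℚ))
  have hT : AlgebraicIndependent ℚ (Subtype.val : T → F) := hmax.1.1
  have hTS : T ⊆ (S : Set F) := hmax.1.2
  set L := IntermediateField.adjoin ℚ T with hL
  haveI : CharZero ↥L := charZero_of_injective_algebraMap (algebraMap ℚ ↥L).injective
  -- every generator is integral over L
  have hSint : ∀ x ∈ (S : Set F), IsIntegral ↥L x := by
    intro x hxS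
    by_contra hni
    have htr : Transcendental ↥L x := fun halg => hni (isAlgebraic_iff_isIntegral.mp halg)
    have hAI := algIndep_insert hT htr
    have hsub : insert x T ⊆ T :=
      hmax.2 ⟨hAI, Set.insert_subset hxS hTS⟩ (Set.subset_insert x T)
    have hxT : x ∈ T := hsub (Set.mem_insert x T)
    exact htr (isAlgebraic_algebraMap (⟨x, subset_adjoin ℚ T hxT⟩ : ↥L))
  haveI hFD0 : FiniteDimensional ↥L ↥(IntermediateField.adjoin ↥L (S : Set F)) :=
    IntermediateField.finiteDimensional_adjoin hSint
  have htop : IntermediateField.adjoin ↥L (S : Set F) = ⊤ := by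
    rw [eq_top_iff]
    intro x _
    have hle : IntermediateField.adjoin ℚ (S : Set F) ≤
        IntermediateField.restrictScalars ℚ (IntermediateField.adjoin ↥L (S : Set F)) :=
      adjoin_le_iff.mpr (fun y hy => subset_adjoin ↥L _ hy)
    exact hle (hS ▸ IntermediateField.mem_top)
  haveI : FiniteDimensional ↥L F := by
    rw [htop] at hFD0
    exact IntermediateField.topEquiv.toLinearEquiv.finiteDimensional
  haveI : Algebra.IsAlgebraic ↥L F := Algebra.IsAlgebraic.of_finite ↥L F
  haveI : PerfectField ↥L := PerfectField.ofCharZero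
  haveI : Finite (IntermediateField ↥L F) :=
    Field.finite_intermediateField_of_exists_primitive_element ↥L F
      (Field.exists_primitive_element ↥L F)
  -- nonsquares of ℕ remain nonsquares in L
  have hnsqL : ∀ n : ℕ, ¬IsSquare n → ∀ c : ↥L, c ^ 2 ≠ (n : ↥L) := by
    intro n hn c hc
    have hrQ : ∀ cq : ℚ, cq ^ 2 ≠ (n : ℚ) := by
      intro cq hcq
      exact hn (Rat.isSquare_natCast_iff.mp ⟨cq, by rw [← hcq]; ring⟩)
    have hcF : ((c : F)) ^ 2 = algebraMap ℚ F ((n : ℕ) : ℚ) := by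
      have h' : ((c ^ 2 : ↥L) : F) = (((n : ℕ) : ↥L) : F) := by rw [hc]
      push_cast at h'
      rw [h', map_natCast]
    exact nonsquare_adjoin_transcendental hT hrQ (c : F) c.2 hcF
  -- the set of bad squarefree numbers is finite
  set Bad : Set ℕ := {n | 2 ≤ n ∧ Squarefree n ∧ ∃ y : F, y ^ 2 = (n : F)} with hBad
  have hBadFin : Bad.Finite := by
    rw [← Set.finite_coe_iff]
    have hy : ∀ n : ↥Bad, ∃ y : F, y ^ 2 = ((n : ℕ) : F) := fun n => n.2.2.2
    choose y hy using hy
    have hyalg : ∀ n : ↥Bad, (y n) ^ 2 = algebraMap ↥L F (((n : ℕ) : ℕ) : ↥L) := by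
      intro n; rw [map_natCast]; exact hy n
    refine Finite.of_injective (fun n : ↥Bad => (IntermediateField.adjoin ↥L {y n} :
      IntermediateField ↥L F)) ?_
    intro n m hnm
    by_contra hne
    have hnem : (n : ℕ) ≠ (m : ℕ) := fun h => hne (Subtype.ext h)
    have hnm' : IntermediateField.adjoin ↥L {y n} = IntermediateField.adjoin ↥L {y m} := hnm
    have hmem : y m ∈ IntermediateField.adjoin ↥L {y n} := by
      rw [hnm']; exact IntermediateField.mem_adjoin_simple_self ↥L (y m)
    refine sq_not_mem_adjoin (two_ne_zero) (a := ((n : ℕ) : ↥L)) (b := ((m : ℕ) : ↥L))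
      (hnsqL _ (not_isSquare_of_squarefree n.2.1 n.2.2.1))
      (hnsqL _ (not_isSquare_of_squarefree m.2.1 m.2.2.1))
      ?_ (hyalg n) (hyalg m) hmem
    intro c hc
    rw [← Nat.cast_mul] at hc
    exact hnsqL _ (not_isSquare_mul_of_squarefree n.2.2.1 m.2.2.1 hnem) c hc
  -- choose the primes
  obtain ⟨p, hp⟩ := (Nat.infinite_setOf_prime.diff hBadFin).nonempty
  have hpP : p.Prime := hp.1
  have hpB : p ∉ Bad := hp.2
  have hpre : ((fun n => p * n) ⁻¹' Bad).Finite :=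
    Set.Finite.preimage ((mul_right_injective₀ hpP.ne_zero).injOn) hBadFin
  obtain ⟨q, hq⟩ := (Nat.infinite_setOf_prime.diff
    ((hBadFin.union hpre).union (Set.finite_singleton p))).nonempty
  have hqP : q.Prime := hq.1
  have hqB : q ∉ Bad := fun h => hq.2 (Or.inl (Or.inl h))
  have hpqB : p * q ∉ Bad := fun h => hq.2 (Or.inl (Or.inr h))
  have hne : q ≠ p := fun h => hq.2 (Or.inr h)
  refine ⟨p, q, ?_, ?_, ?_⟩
  · intro y hy
    exact hpB ⟨hpP.two_le, hpP.prime.squarefree, y, hy⟩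
  · intro y hy
    exact hqB ⟨hqP.two_le, hqP.prime.squarefree, y, hy⟩
  · intro y hy
    refine hpqB ⟨?_, ?_, y, hy⟩
    · have := hpP.two_le; have := hqP.one_lt; nlinarith
    · exact (Nat.squarefree_mul ((Nat.coprime_primes hpP hqP).mpr (Ne.symm hne))).mpr
        ⟨hpP.prime.squarefree, hqP.prime.squarefree⟩


lemma finrank_biquadratic {F : Type*} [Field F] [CharZero F] {m₁ m₂ : F}
    (h1 : ∀ c : F, c ^ 2 ≠ m₁) (h2 : ∀ c : F, c ^ 2 ≠ m₂) (h12 : ∀ c : F, c ^ 2 ≠ m₁ * m₂) :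
    Module.finrank F
        (IntermediateField.adjoin F
          ({x : AlgebraicClosure F | x ^ 2 = algebraMap F (AlgebraicClosure F) m₁} ∪
           {x : AlgebraicClosure F | x ^ 2 = algebraMap F (AlgebraicClosure F) m₂})) = 4 := by
  set Ω := AlgebraicClosure F
  obtain ⟨s, hs⟩ := IsAlgClosed.exists_pow_nat_eq (algebraMap F Ω m₁) (by norm_num : 0 < 2)
  obtain ⟨t, ht⟩ := IsAlgClosed.exists_pow_nat_eq (algebraMap F Ω m₂) (by norm_num : 0 < 2)
  have hsetT : IntermediateField.adjoin F
      ({x : Ω | x ^ 2 = algebraMap F Ω m₁} ∪ {x : Ω | x ^ 2 = algebraMap F Ω m₂})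
      = IntermediateField.adjoin F ({s} ∪ {t} : Set Ω) := by
    apply le_antisymm
    · rw [adjoin_le_iff]
      rintro x (hx | hx)
      · have hfac : (x - s) * (x + s) = 0 := by
          have hx2 : x ^ 2 - s ^ 2 = 0 := by rw [hx, hs, sub_self]
          linear_combination hx2
        rcases mul_eq_zero.1 hfac with h | h
        · rw [sub_eq_zero] at h
          rw [h]
          exact subset_adjoin F _ (Or.inl rfl)
        · rw [add_eq_zero_iff_eq_neg] at h
          rw [h]
          exact neg_mem (subset_adjoin F _ (Or.inl rfl))
      · have hfac : (x - t) * (x + t) = 0 := by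
          have hx2 : x ^ 2 - t ^ 2 = 0 := by rw [hx, ht, sub_self]
          linear_combination hx2
        rcases mul_eq_zero.1 hfac with h | h
        · rw [sub_eq_zero] at h
          rw [h]
          exact subset_adjoin F _ (Or.inr rfl)
        · rw [add_eq_zero_iff_eq_neg] at h
          rw [h]
          exact neg_mem (subset_adjoin F _ (Or.inr rfl))
    · rw [adjoin_le_iff]
      rintro x (rfl | rfl)
      · exact subset_adjoin F _ (Or.inl hs)
      · exact subset_adjoin F _ (Or.inr ht)
  rw [hsetT, ← adjoin_adjoin_left F {s} {t}]
  have hrankA : Module.finrank F F⟮s⟯ = 2 := finrank_adjoin_sq h1 hs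
  have h2A : ∀ c : ↥F⟮s⟯, c ^ 2 ≠ algebraMap F ↥F⟮s⟯ m₂ := by
    intro c hc
    have hcΩ : (c : Ω) ^ 2 = algebraMap F Ω m₂ := by
      have h' : ((c ^ 2 : ↥F⟮s⟯) : Ω) = ((algebraMap F ↥F⟮s⟯ m₂ : ↥F⟮s⟯) : Ω) := by rw [hc]
      push_cast at h'
      rw [h']
    exact sq_not_mem_adjoin two_ne_zero h1 h2 h12 hs hcΩ c.2
  have htA : t ^ 2 = algebraMap ↥F⟮s⟯ Ω (algebraMap F ↥F⟮s⟯ m₂) := by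
    rw [← IsScalarTower.algebraMap_apply]; exact ht
  have hrankB : Module.finrank ↥F⟮s⟯ ↥(IntermediateField.adjoin ↥F⟮s⟯ {t}) = 2 :=
    finrank_adjoin_sq h2A htA
  have hmul := Module.finrank_mul_finrank F ↥F⟮s⟯ ↥(IntermediateField.adjoin ↥F⟮s⟯ {t})
  have hrfl : Module.finrank F ↥(restrictScalars F (IntermediateField.adjoin ↥F⟮s⟯ {t}))
      = Module.finrank F ↥(IntermediateField.adjoin ↥F⟮s⟯ {t}) := rfl
  rw [hrfl, ← hmul, hrankA, hrankB]


/-- If `F` is a field that is finitely generated as a field extension of `ℚ`,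
then there exist `m₁, m₂ ∈ F` such that the intermediate field `K = F(√m₁, √m₂)` of `F̄/F`,
generated over `F` by the square roots of `m₁` and `m₂` in a fixed algebraic closure `F̄`,
satisfies `[K : F] = 4`; i.e. `F` admits a (separable) biquadratic extension. -/
theorem exists_biquadratic_extension (F : Type*) [Field F] [Algebra ℚ F]
    (hFG : ∃ S : Finset F, IntermediateField.adjoin ℚ (S : Set F) = ⊤) :
    ∃ m₁ m₂ : F,
      Module.finrank F
        (IntermediateField.adjoin F
          ({x : AlgebraicClosure F | x ^ 2 = algebraMap F (AlgebraicClosure F) m₁} ∪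
           {x : AlgebraicClosure F | x ^ 2 = algebraMap F (AlgebraicClosure F) m₂})) = 4 := by
  haveI : CharZero F := charZero_of_injective_algebraMap (algebraMap ℚ F).injective
  obtain ⟨p, q, h1, h2, h12⟩ := exists_good_primes F hFG
  refine ⟨(p : F), (q : F), ?_⟩
  refine finrank_biquadratic h1 h2 ?_
  intro c hc
  rw [show ((p : F) * (q : F)) = ((p * q : ℕ) : F) by push_cast; ring] at hc
  exact h12 c hc
end
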